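/- Let n, m ∈ ℕ with n ≥ 1, m ≠ n, let (a_k)_{k≥m}, (b_k)_{k≥m} be square-summable sequences with (a_m, b_m) ≠ (0,0), and define β(u,t) = Σ_{k=m}^∞ e^{(1-k²/n²)t}(a_k cos(ku) + b_k sin(ku)) and β̃(u,t) = e^{(1-m²/n²)t}(a_m cos(mu) + b_m sin(mu)). Then for every ε ∈ (0,1) and δ > 0 there exists M > 0 such that sup_u |β(u,t) - β̃(u,t)| ≤ M e^{(1 - (m²+ε)/n²)t} for all t ≥ δ. In particular, e^{-(1-m²/n²)t}(β(·,t) - β̃(·,t)) → 0 uniformly as t → ∞. -/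
import Mathlib


open Real Filter

set_option maxHeartbeats 2000000 in
/-- Exponential decay of the difference between the flow's `β` and the self-similar `β̃`. -/
theorem beta_decay_to_self_similar
    (n m : ℕ) (hn : 1 ≤ n) (hmn : m ≠ n)
    (a b : ℕ → ℝ)
    (hsum : Summable (fun k => a k ^ 2 + b k ^ 2))
    (hlow : ∀ k < m, a k = 0 ∧ b k = 0)
    (hm : (a m, b m) ≠ ((0 : ℝ), (0 : ℝ)))
    (β βt : ℝ → ℝ → ℝ)
    (hβ : ∀ u t, β u t = ∑' k : ℕ,
      Real.exp ((1 - (k : ℝ) ^ 2 / (n : ℝ) ^ 2) * t)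
        * (a k * Real.cos (k * u) + b k * Real.sin (k * u)))
    (hβt : ∀ u t, βt u t
      = Real.exp ((1 - (m : ℝ) ^ 2 / (n : ℝ) ^ 2) * t)
        * (a m * Real.cos (m * u) + b m * Real.sin (m * u))) :
    (∀ ε ∈ Set.Ioo (0 : ℝ) 1, ∀ δ > (0 : ℝ), ∃ M > (0 : ℝ), ∀ t ≥ δ, ∀ u : ℝ,
      |β u t - βt u t| ≤ M * Real.exp ((1 - ((m : ℝ) ^ 2 + ε) / (n : ℝ) ^ 2) * t)) ∧
    Tendsto (fun t : ℝ => ⨆ u : ℝ,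
        |Real.exp (-(1 - (m : ℝ) ^ 2 / (n : ℝ) ^ 2) * t) * (β u t - βt u t)|)
      atTop (nhds 0) := by
  have hn0 : (0:ℝ) < (n:ℝ) := by exact_mod_cast hn
  have hN2 : (0:ℝ) < (n:ℝ)^2 := by positivity
  -- First part
  have key : ∀ ε ∈ Set.Ioo (0 : ℝ) 1, ∀ δ > (0 : ℝ), ∃ M > (0 : ℝ), ∀ t ≥ δ, ∀ u : ℝ,
      |β u t - βt u t| ≤ M * Real.exp ((1 - ((m : ℝ) ^ 2 + ε) / (n : ℝ) ^ 2) * t) := by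
    intro ε hε δ hδ
    obtain ⟨hε0, hε1⟩ := hε
    set c : ℕ → ℝ := fun k =>
      if m < k then (|a k| + |b k|) *
        Real.exp (-(((k:ℝ)^2 - (m:ℝ)^2 - ε) * δ) / (n:ℝ)^2) else 0 with hc
    have hcnonneg : ∀ k, 0 ≤ c k := by
      intro k
      simp only [hc]
      split
      · positivity
      · exact le_refl 0
    -- Summability of c
    have hcsum : Summable c := by
      have hr0 : (0:ℝ) ≤ Real.exp (-(δ / (n:ℝ)^2)) := (Real.exp_pos _).le
      have hr1 : Real.exp (-(δ / (n:ℝ)^2)) < 1 :=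
        Real.exp_lt_one_iff.mpr (neg_lt_zero.mpr (div_pos hδ hN2))
      have hgeo : Summable (fun k : ℕ =>
          (2 * Real.exp (((m:ℝ)^2 + ε) * δ / (n:ℝ)^2)) *
            Real.exp (-(δ / (n:ℝ)^2)) ^ k) :=
        (summable_geometric_of_lt_one hr0 hr1).mul_left _
      refine Summable.of_nonneg_of_le hcnonneg (fun k => ?_) (hsum.add hgeo)
      by_cases hk : m < k
      · have hk1 : (1:ℝ) ≤ (k:ℝ) := by
          have : 1 ≤ k := by omega
          exact_mod_cast this
        have hA : (0:ℝ) ≤ ((k:ℝ)^2 - (m:ℝ)^2 - ε) := by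
          have hmk : ((m:ℝ) + 1) ≤ (k:ℝ) := by exact_mod_cast hk
          nlinarith [sq_nonneg ((m:ℝ))]
        have he1 : Real.exp (-(((k:ℝ)^2 - (m:ℝ)^2 - ε) * δ) / (n:ℝ)^2) ≤ 1 := by
          apply Real.exp_le_one_iff.mpr
          have h0 : 0 ≤ ((k:ℝ)^2 - (m:ℝ)^2 - ε) * δ := mul_nonneg hA hδ.le
          rw [neg_div]
          exact neg_nonpos.mpr (div_nonneg h0 hN2.le)
        have hab : |a k| + |b k| ≤ (a k ^ 2 + b k ^ 2) + 2 := by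
          nlinarith [abs_nonneg (a k), abs_nonneg (b k), sq_abs (a k), sq_abs (b k),
            sq_nonneg (|a k| - 1), sq_nonneg (|b k| - 1)]
        have hsplit : Real.exp (-(((k:ℝ)^2 - (m:ℝ)^2 - ε) * δ) / (n:ℝ)^2)
            ≤ Real.exp (((m:ℝ)^2 + ε) * δ / (n:ℝ)^2) * Real.exp (-(δ / (n:ℝ)^2)) ^ k := by
          rw [← Real.exp_nat_mul, ← Real.exp_add]
          apply Real.exp_le_exp.mpr
          have hkk : (k:ℝ) ≤ (k:ℝ)^2 := by nlinarith
          have heq : ((m:ℝ)^2 + ε) * δ / (n:ℝ)^2 + (k:ℝ) * -(δ / (n:ℝ)^2)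
              + (((k:ℝ)^2 - (m:ℝ)^2 - ε) * δ) / (n:ℝ)^2
              = ((k:ℝ)^2 - (k:ℝ)) * δ / (n:ℝ)^2 := by
            field_simp
            ring
          have hpos : 0 ≤ ((k:ℝ)^2 - (k:ℝ)) * δ / (n:ℝ)^2 :=
            div_nonneg (mul_nonneg (by nlinarith) hδ.le) hN2.le
          rw [neg_div]
          linarith
        have habnn : (0:ℝ) ≤ |a k| + |b k| := by positivity
        have hsq : (0:ℝ) ≤ a k ^ 2 + b k ^ 2 := by positivity
        calc c k = (|a k| + |b k|) *
              Real.exp (-(((k:ℝ)^2 - (m:ℝ)^2 - ε) * δ) / (n:ℝ)^2) := by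
              simp only [hc, if_pos hk]
          _ ≤ ((a k ^ 2 + b k ^ 2) + 2) *
              Real.exp (-(((k:ℝ)^2 - (m:ℝ)^2 - ε) * δ) / (n:ℝ)^2) :=
              mul_le_mul_of_nonneg_right hab (Real.exp_pos _).le
          _ = (a k ^ 2 + b k ^ 2) *
              Real.exp (-(((k:ℝ)^2 - (m:ℝ)^2 - ε) * δ) / (n:ℝ)^2)
              + 2 * Real.exp (-(((k:ℝ)^2 - (m:ℝ)^2 - ε) * δ) / (n:ℝ)^2) := by ring
          _ ≤ (a k ^ 2 + b k ^ 2) * 1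
              + 2 * (Real.exp (((m:ℝ)^2 + ε) * δ / (n:ℝ)^2) * Real.exp (-(δ / (n:ℝ)^2)) ^ k) :=
              add_le_add (mul_le_mul_of_nonneg_left he1 hsq)
                (mul_le_mul_of_nonneg_left hsplit (by norm_num))
          _ = (a k ^ 2 + b k ^ 2)
              + (2 * Real.exp (((m:ℝ)^2 + ε) * δ / (n:ℝ)^2)) * Real.exp (-(δ / (n:ℝ)^2)) ^ k := by
              ring
      · simp only [hc, if_neg hk]
        positivity
    have hctsum : (0:ℝ) ≤ ∑' k, c k := tsum_nonneg hcnonneg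
    refine ⟨(∑' k, c k) + 1, by linarith, ?_⟩
    intro t ht u
    set E : ℝ := Real.exp ((1 - ((m:ℝ)^2 + ε) / (n:ℝ)^2) * t) with hE
    have hEpos : 0 < E := Real.exp_pos _
    set f : ℕ → ℝ := fun k =>
      Real.exp ((1 - (k:ℝ)^2 / (n:ℝ)^2) * t) *
        (a k * Real.cos (k * u) + b k * Real.sin (k * u)) with hf
    set g : ℕ → ℝ := fun k => if k = m then 0 else f k with hg
    have hgle : ∀ k, |g k| ≤ c k * E := by
      intro k
      by_cases hkm : k = m
      · simp only [hg, if_pos hkm, abs_zero]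
        exact mul_nonneg (hcnonneg k) hEpos.le
      rcases lt_or_gt_of_ne hkm with hklt | hkgt
      · have h0 := hlow k hklt
        simp only [hg, if_neg hkm, hf, h0.1, h0.2, zero_mul, add_zero, mul_zero, abs_zero]
        exact mul_nonneg (hcnonneg k) hEpos.le
      · have hck : c k = (|a k| + |b k|) *
            Real.exp (-(((k:ℝ)^2 - (m:ℝ)^2 - ε) * δ) / (n:ℝ)^2) := by
          simp only [hc, if_pos hkgt]
        have htrig : |a k * Real.cos (k * u) + b k * Real.sin (k * u)| ≤ |a k| + |b k| := by
          calc |a k * Real.cos (k * u) + b k * Real.sin (k * u)|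
              ≤ |a k * Real.cos (k * u)| + |b k * Real.sin (k * u)| := abs_add_le _ _
            _ = |a k| * |Real.cos (k * u)| + |b k| * |Real.sin (k * u)| := by
                rw [abs_mul, abs_mul]
            _ ≤ |a k| * 1 + |b k| * 1 := by
                gcongr
                · exact Real.abs_cos_le_one _
                · exact Real.abs_sin_le_one _
            _ = |a k| + |b k| := by ring
        have hexp : Real.exp ((1 - (k:ℝ)^2 / (n:ℝ)^2) * t)
            ≤ Real.exp (-(((k:ℝ)^2 - (m:ℝ)^2 - ε) * δ) / (n:ℝ)^2) * E := by
          rw [hE, ← Real.exp_add]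
          apply Real.exp_le_exp.mpr
          have hA : (0:ℝ) ≤ ((k:ℝ)^2 - (m:ℝ)^2 - ε) := by
            have hmk : ((m:ℝ) + 1) ≤ (k:ℝ) := by exact_mod_cast hkgt
            nlinarith [sq_nonneg ((m:ℝ))]
          have h1 : ((k:ℝ)^2 - (m:ℝ)^2 - ε) * δ ≤ ((k:ℝ)^2 - (m:ℝ)^2 - ε) * t :=
            mul_le_mul_of_nonneg_left ht hA
          have h2 : (1 - (k:ℝ)^2 / (n:ℝ)^2) * t
              = -((((k:ℝ)^2 - (m:ℝ)^2 - ε) * t) / (n:ℝ)^2)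
                + (1 - ((m:ℝ)^2 + ε) / (n:ℝ)^2) * t := by
            field_simp [hN2.ne']
            ring
          rw [h2]
          have h3 : ((k:ℝ)^2 - (m:ℝ)^2 - ε) * δ / (n:ℝ)^2
              ≤ ((k:ℝ)^2 - (m:ℝ)^2 - ε) * t / (n:ℝ)^2 :=
            div_le_div_of_nonneg_right h1 hN2.le
          rw [neg_div]
          linarith
        calc |g k| = Real.exp ((1 - (k:ℝ)^2 / (n:ℝ)^2) * t) *
              |a k * Real.cos (k * u) + b k * Real.sin (k * u)| := by
              simp only [hg, if_neg hkm, hf, abs_mul, Real.abs_exp]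
          _ ≤ (Real.exp (-(((k:ℝ)^2 - (m:ℝ)^2 - ε) * δ) / (n:ℝ)^2) * E) * (|a k| + |b k|) := by
              apply mul_le_mul hexp htrig (abs_nonneg _)
              positivity
          _ = c k * E := by rw [hck]; ring
    have hsumCE : Summable (fun k => c k * E) := hcsum.mul_right E
    have habs : Summable (fun k => |g k|) :=
      Summable.of_nonneg_of_le (fun k => abs_nonneg _) hgle hsumCE
    have hgsum : Summable g := habs.of_abs
    have hitesum : Summable (fun k : ℕ => if k = m then f m else 0) :=
      (hasSum_ite_eq m (f m)).summable
    have hfsum : Summable f := by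
      have : f = fun k => g k + if k = m then f m else 0 := by
        funext k
        by_cases hkm : k = m
        · simp [hg, hkm]
        · simp [hg, hkm]
      rw [this]
      exact hgsum.add hitesum
    have hdiff : β u t - βt u t = ∑' k, g k := by
      rw [hβ u t, hβt u t]
      have hfm : f m = Real.exp ((1 - (m:ℝ)^2 / (n:ℝ)^2) * t)
          * (a m * Real.cos (m * u) + b m * Real.sin (m * u)) := by simp only [hf]
      have h0 : (∑' (k : ℕ), Real.exp ((1 - (k:ℝ)^2 / (n:ℝ)^2) * t)
          * (a k * Real.cos (k * u) + b k * Real.sin (k * u))) = ∑' k, f k := by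
        simp only [hf]
      have h1 : (∑' k, f k) = (∑' k, g k) + f m := by
        conv_lhs => rw [show f = fun k => g k + if k = m then f m else 0 from by
          funext k; by_cases hkm : k = m <;> simp [hg, hkm]]
        rw [Summable.tsum_add hgsum hitesum, (hasSum_ite_eq m (f m)).tsum_eq]
      rw [← hfm, h0, h1]
      ring
    rw [hdiff]
    calc |∑' k, g k| ≤ ∑' k, |g k| := by
          have habs' : Summable (fun k => ‖g k‖) := by
            simpa only [Real.norm_eq_abs] using habs
          have h := norm_tsum_le_tsum_norm (f := g) habs'
          simpa only [Real.norm_eq_abs] using h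
      _ ≤ ∑' k, c k * E := Summable.tsum_le_tsum hgle habs hsumCE
      _ = (∑' k, c k) * E := tsum_mul_right
      _ ≤ ((∑' k, c k) + 1) * E := by nlinarith
  refine ⟨key, ?_⟩
  -- Second part
  obtain ⟨M, hMpos, hM⟩ := key (1/2) ⟨by norm_num, by norm_num⟩ 1 one_pos
  have key2 : ∀ t ≥ (1:ℝ), ∀ u : ℝ,
      |Real.exp (-(1 - (m:ℝ)^2 / (n:ℝ)^2) * t) * (β u t - βt u t)|
        ≤ M * Real.exp (-(1 / (2 * (n:ℝ)^2)) * t) := by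
    intro t ht u
    have hBd := hM t ht u
    calc |Real.exp (-(1 - (m:ℝ)^2 / (n:ℝ)^2) * t) * (β u t - βt u t)|
        = Real.exp (-(1 - (m:ℝ)^2 / (n:ℝ)^2) * t) * |β u t - βt u t| := by
          rw [abs_mul, Real.abs_exp]
      _ ≤ Real.exp (-(1 - (m:ℝ)^2 / (n:ℝ)^2) * t)
            * (M * Real.exp ((1 - ((m:ℝ)^2 + 1/2) / (n:ℝ)^2) * t)) := by
          exact mul_le_mul_of_nonneg_left hBd (Real.exp_pos _).le
      _ = M * Real.exp (-(1 / (2 * (n:ℝ)^2)) * t) := by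
          rw [mul_comm (Real.exp _) (M * _), mul_assoc, ← Real.exp_add]
          congr 1
          field_simp [hN2.ne']
          ring
  have hBtend : Tendsto (fun t : ℝ => M * Real.exp (-(1 / (2 * (n:ℝ)^2)) * t))
      atTop (nhds 0) := by
    have h2 : Tendsto (fun t : ℝ => -(1 / (2 * (n:ℝ)^2)) * t) atTop atBot := by
      refine (tendsto_const_mul_atBot_of_neg ?_).mpr tendsto_id
      have : (0:ℝ) < 1 / (2 * (n:ℝ)^2) := by positivity
      linarith
    have h3 : Tendsto (fun t : ℝ => Real.exp (-(1 / (2 * (n:ℝ)^2)) * t)) atTop (nhds 0) :=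
      Real.tendsto_exp_atBot.comp h2
    simpa using h3.const_mul M
  apply squeeze_zero' ?_ ?_ hBtend
  · filter_upwards [eventually_ge_atTop (1:ℝ)] with t ht
    have hbdd : BddAbove (Set.range fun u : ℝ =>
        |Real.exp (-(1 - (m:ℝ)^2 / (n:ℝ)^2) * t) * (β u t - βt u t)|) := by
      refine ⟨M * Real.exp (-(1 / (2 * (n:ℝ)^2)) * t), ?_⟩
      rintro x ⟨u, rfl⟩
      exact key2 t ht u
    exact le_trans (abs_nonneg _) (le_ciSup hbdd 0)
  · filter_upwards [eventually_ge_atTop (1:ℝ)] with t ht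
    exact ciSup_le fun u => key2 t ht u
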